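/- Let B be a simple bipartite graph with bipartition V(B) = W ⊎ U, let G be its half-square, and let k be a positive integer such that G has k pairwise vertex-disjoint cycles. Let 𝒞 ∈ 𝒮, and let C ∈ 𝒞 be a cycle that is not a triangle with all three vertices in a single special clique of G. Let v ∈ V(C) and let x and y be the two neighbors of v on C. Then there is no special vertex s ∈ U with v, x, y ∈ N_B(s); that is, no special clique of G contains all of v, x, y. -/

import Mathlib

open SimpleGraph

section Defs

variable {V : Type*} {ι : Type*}

/-- `W, U` is a bipartition of the simple graph `B`. -/
def IsBipartition (B : SimpleGraph V) (W U : Set V) : Prop :=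
  (∀ v, v ∈ W ∨ v ∈ U) ∧ (∀ v, ¬(v ∈ W ∧ v ∈ U)) ∧
    ∀ ⦃a b⦄, B.Adj a b → (a ∈ W ∧ b ∈ U) ∨ (a ∈ U ∧ b ∈ W)

/-- The half-square of `B` on side `W`: two distinct vertices of `W` are adjacent
iff they have a common neighbor in `B`. -/
def halfSquare (B : SimpleGraph V) (W : Set V) : SimpleGraph V where
  Adj a b := a ≠ b ∧ a ∈ W ∧ b ∈ W ∧ ∃ s, B.Adj a s ∧ B.Adj b s
  symm := ⟨by
    rintro a b ⟨hne, ha, hb, s, h1, h2⟩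
    exact ⟨hne.symm, hb, ha, s, h2, h1⟩⟩
  loopless := ⟨by rintro a ⟨hne, _⟩; exact hne rfl⟩

/-- Tree decomposition of the graph `H` with vertex set `S`, over the tree `T`. -/
structure IsTreeDecompOn (H : SimpleGraph V) (S : Set V) (T : SimpleGraph ι)
    (β : ι → Set V) : Prop where
  covers : ∀ v ∈ S, ∃ t, v ∈ β t
  edge_mem : ∀ ⦃u v⦄, H.Adj u v → ∃ t, u ∈ β t ∧ v ∈ β t
  conn : ∀ v ∈ S, (T.induce {t | v ∈ β t}).Connected

/-- `t'` is a descendant of `t` (inclusively) in the tree `T` rooted at `r`: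
`t` lies on every path from `t'` to the root. -/
def Desc (T : SimpleGraph ι) (r : ι) (t t' : ι) : Prop :=
  ∀ p : T.Walk t' r, p.IsPath → t ∈ p.support

/-- `γ(t)`: union of the bags of `t` and of all its descendants. -/
def gammaSet (T : SimpleGraph ι) (r : ι) (β : ι → Set V) (t : ι) : Set V :=
  ⋃ t' ∈ {t' | Desc T r t t'}, β t'

/-- The bag of the derived decomposition. -/
def derivedBag (B : SimpleGraph V) (W U : Set V) (T : SimpleGraph ι) (r : ι)
    (β : ι → Set V) (t : ι) : Set V :=
  (β t ∩ W) ∪ ⋃ s ∈ β t ∩ U, B.neighborSet s ∩ gammaSet T r β t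

def originalSet (B : SimpleGraph V) (W U : Set V) (T : SimpleGraph ι) (r : ι)
    (β : ι → Set V) (t : ι) : Set V :=
  β t ∩ derivedBag B W U T r β t

def fakeSet (B : SimpleGraph V) (W U : Set V) (T : SimpleGraph ι) (r : ι)
    (β : ι → Set V) (t : ι) : Set V :=
  derivedBag B W U T r β t \ β t

def cliquesAt (B : SimpleGraph V) (U : Set V) (β : ι → Set V) (t : ι) : Set (Set V) :=
  {K | ∃ s ∈ β t ∩ U, K = B.neighborSet s}

def IsChild (T : SimpleGraph ι) (r : ι) (t t' : ι) : Prop :=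
  T.Adj t t' ∧ Desc T r t t'

def IsLeafNode (T : SimpleGraph ι) (r : ι) (β : ι → Set V) (t : ι) : Prop :=
  (∀ t', ¬ IsChild T r t t') ∧ β t = ∅

def IsForgetNode (T : SimpleGraph ι) (r : ι) (β : ι → Set V) (w : V) (t : ι) : Prop :=
  ∃ t', IsChild T r t t' ∧ (∀ t'', IsChild T r t t'' → t'' = t') ∧
    w ∈ β t' ∧ β t = β t' \ {w}

def IsIntroduceNode (T : SimpleGraph ι) (r : ι) (β : ι → Set V) (w : V) (t : ι) : Prop :=
  ∃ t', IsChild T r t t' ∧ (∀ t'', IsChild T r t t'' → t'' = t') ∧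
    w ∈ β t ∧ β t \ {w} = β t'

def IsJoinNode (T : SimpleGraph ι) (r : ι) (β : ι → Set V) (t : ι) : Prop :=
  ∃ t₁ t₂, t₁ ≠ t₂ ∧ IsChild T r t t₁ ∧ IsChild T r t t₂ ∧
    (∀ t'', IsChild T r t t'' → t'' = t₁ ∨ t'' = t₂) ∧ β t = β t₁ ∧ β t = β t₂

/-- A nice (rooted) tree decomposition. -/
def IsNice (T : SimpleGraph ι) (r : ι) (β : ι → Set V) : Prop :=
  β r = ∅ ∧ ∀ t, IsLeafNode T r β t ∨ (∃ w, IsForgetNode T r β w t) ∨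
    (∃ w, IsIntroduceNode T r β w t) ∨ IsJoinNode T r β t

/-- `E(X)`: edges of `G` with both endpoints in `X`. -/
def edgesIn (G : SimpleGraph V) (X : Set V) : Set (Sym2 V) :=
  {e | e ∈ G.edgeSet ∧ ∀ x ∈ e, x ∈ X}

end Defs

section Packing

variable {V : Type*}

/-- A family of `k` pairwise vertex-disjoint cycles in `G`. -/
def IsCyclePacking (G : SimpleGraph V) (k : ℕ) (w : Fin k → V)
    (c : ∀ i, G.Walk (w i) (w i)) : Prop :=
  (∀ i, (c i).IsCycle) ∧
    ∀ i j, i ≠ j → ∀ x, x ∈ (c i).support → x ∉ (c j).support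

/-- Every cycle of the family is an induced cycle of `G`. -/
def IsInducedFamily (G : SimpleGraph V) {k : ℕ} {w : Fin k → V}
    (c : ∀ i, G.Walk (w i) (w i)) : Prop :=
  ∀ i, ∀ x ∈ (c i).support, ∀ y ∈ (c i).support, G.Adj x y → s(x, y) ∈ (c i).edges

/-- A cycle is a triangle with all its vertices in a single special clique. -/
def IsSpecialTriangle (B : SimpleGraph V) (U : Set V) {G : SimpleGraph V} {w : V}
    (c : G.Walk w w) : Prop :=
  c.length = 3 ∧ ∃ s₀ ∈ U, ∀ x ∈ c.support, x ∈ B.neighborSet s₀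

/-- The number of cycles of the family that are triangles inside special cliques. -/
noncomputable def triCount (B : SimpleGraph V) (U : Set V) {G : SimpleGraph V}
    {k : ℕ} {w : Fin k → V} (c : ∀ i, G.Walk (w i) (w i)) : ℕ :=
  {i | IsSpecialTriangle B U (c i)}.ncard

/-- Membership in `𝒮`: a `k`-solution consisting of induced cycles of the
half-square that maximizes the number of triangles from special cliques among
all such `k`-solutions. -/
def InOptS (B : SimpleGraph V) (W U : Set V) (k : ℕ) (w : Fin k → V)
    (c : ∀ i, (halfSquare B W).Walk (w i) (w i)) : Prop :=
  IsCyclePacking (halfSquare B W) k w c ∧ IsInducedFamily (halfSquare B W) c ∧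
    ∀ (w' : Fin k → V) (c' : ∀ i, (halfSquare B W).Walk (w' i) (w' i)),
      IsCyclePacking (halfSquare B W) k w' c' → IsInducedFamily (halfSquare B W) c' →
        triCount B U c' ≤ triCount B U c

end Packing


section Aux
variable {V : Type*} {G : SimpleGraph V}


lemma path_edge_start {u v w : V} (p : G.Walk u v) (hp : p.IsPath)
    (h : s(u, w) ∈ p.edges) :
    ∃ (ha : G.Adj u w) (q : G.Walk w v), p = Walk.cons ha q := by
  cases p with
  | nil => simp at h
  | cons ha' q' =>
    rw [Walk.edges_cons, List.mem_cons] at h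
    rcases h with h | h
    · rw [Sym2.eq_iff] at h
      rcases h with ⟨-, rfl⟩ | ⟨h1, h2⟩
      · exact ⟨ha', q', rfl⟩
      · exact absurd h1 ha'.ne
    · exfalso
      have hmem : u ∈ q'.support := q'.fst_mem_support_of_mem_edges h
      have hnd := hp.support_nodup
      rw [Walk.support_cons] at hnd
      exact (List.nodup_cons.mp hnd).1 hmem

lemma path_loop_eq_nil {v : V} (p : G.Walk v v) (hp : p.IsPath) : p = Walk.nil := by
  cases p with
  | nil => rfl
  | cons ha' q' =>
    exfalso
    have hnd := hp.support_nodup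
    rw [Walk.support_cons] at hnd
    exact (List.nodup_cons.mp hnd).1 q'.end_mem_support

lemma cycle_tri_aux {v x y : V} (ha : G.Adj v x) (q : G.Walk x v) (hq : q.IsPath)
    (hvy : v ≠ y)
    (hy : s(v, y) ∈ q.edges) (hxy' : s(x, y) ∈ q.edges) :
    (Walk.cons ha q).length = 3 ∧
      ∀ z ∈ (Walk.cons ha q).support, z = v ∨ z = x ∨ z = y := by
  obtain ⟨h2, q2, rfl⟩ := path_edge_start q hq hxy'
  have hq2 : q2.IsPath := hq.of_cons
  have hy2 : s(v, y) ∈ q2.edges := by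
    rw [Walk.edges_cons, List.mem_cons] at hy
    rcases hy with hy | hy
    · rw [Sym2.eq_iff] at hy
      rcases hy with ⟨h1, -⟩ | ⟨h1, -⟩
      · exact absurd h1 ha.ne
      · exact absurd h1 hvy
    · exact hy
  rw [Sym2.eq_swap] at hy2
  obtain ⟨h3, q3, rfl⟩ := path_edge_start q2 hq2 hy2
  have : q3 = Walk.nil := path_loop_eq_nil q3 hq2.of_cons
  subst this
  refine ⟨rfl, ?_⟩
  intro z hz
  simp only [Walk.support_cons, Walk.support_nil, List.mem_cons,
    List.mem_singleton] at hz
  tauto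

lemma cycle_triangle {v x y : V} (d : G.Walk v v) (hd : d.IsCycle)
    (hxy : x ≠ y) (hx : s(v, x) ∈ d.edges) (hy : s(v, y) ∈ d.edges)
    (hxy' : s(x, y) ∈ d.edges) :
    d.length = 3 ∧ ∀ z ∈ d.support, z = v ∨ z = x ∨ z = y := by
  have hvx : v ≠ x := (d.edges_subset_edgeSet hx : G.Adj v x).ne
  have hvy : v ≠ y := (d.edges_subset_edgeSet hy : G.Adj v y).ne
  cases d with
  | nil => exact absurd hd Walk.IsCycle.not_of_nil
  | cons ha q =>
    rename_i b
    rw [Walk.cons_isCycle_iff] at hd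
    obtain ⟨hq, hne⟩ := hd
    rw [Walk.edges_cons, List.mem_cons] at hx hy
    -- first rule out the case both s(v,x), s(v,y) in q.edges
    have key : ∀ a b : V, a ≠ b → s(v, a) ∈ q.edges → s(v, b) ∈ q.edges → False := by
      intro a b hab ha' hb'
      have hqr : q.reverse.IsPath := hq.reverse
      have ha'' : s(v, a) ∈ q.reverse.edges := by rwa [Walk.edges_reverse, List.mem_reverse]
      have hb'' : s(v, b) ∈ q.reverse.edges := by rwa [Walk.edges_reverse, List.mem_reverse]
      obtain ⟨_, r1, hr1⟩ := path_edge_start q.reverse hqr ha''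
      obtain ⟨_, r2, hr2⟩ := path_edge_start q.reverse hqr hb''
      have hs1 := congrArg Walk.support hr1
      have hs2 := congrArg Walk.support hr2
      rw [Walk.support_cons] at hs1 hs2
      have hss : r1.support = r2.support := (List.cons_eq_cons.mp (hs1.symm.trans hs2)).2
      have h' : a :: r1.support.tail = b :: r2.support.tail := by
        rw [← r1.support_eq_cons, ← r2.support_eq_cons]; exact hss
      exact hab (List.cons_eq_cons.mp h').1
    rcases hx with hx | hx
    · -- x = snd
      obtain rfl : x = b := by
        rw [Sym2.eq_iff] at hx
        rcases hx with ⟨-, h2⟩ | ⟨-, h2⟩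
        · exact h2
        · exact absurd h2 hvx.symm
      have hy' : s(v, y) ∈ q.edges := by
        rcases hy with hy | hy
        · rw [Sym2.eq_iff] at hy
          rcases hy with ⟨-, h2⟩ | ⟨-, h2⟩
          · exact absurd h2.symm hxy
          · exact absurd h2 hvy.symm
        · exact hy
      have hxy'' : s(x, y) ∈ q.edges := by
        rw [Walk.edges_cons, List.mem_cons] at hxy'
        rcases hxy' with h | h
        · rw [Sym2.eq_iff] at h
          rcases h with ⟨h1, -⟩ | ⟨-, h2⟩
          · exact absurd h1.symm hvx
          · exact absurd h2.symm hvy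
        · exact h
      exact cycle_tri_aux ha q hq hvy hy' hxy''
    · -- y = snd
      rcases hy with hy | hy
      · obtain rfl : y = b := by
          rw [Sym2.eq_iff] at hy
          rcases hy with ⟨-, h2⟩ | ⟨-, h2⟩
          · exact h2
          · exact absurd h2 hvy.symm
        have hxy'' : s(y, x) ∈ q.edges := by
          rw [Sym2.eq_swap] at hxy'
          rw [Walk.edges_cons, List.mem_cons] at hxy'
          rcases hxy' with h | h
          · rw [Sym2.eq_iff] at h
            rcases h with ⟨h1, -⟩ | ⟨-, h2⟩
            · exact absurd h1.symm hvy
            · exact absurd h2.symm hvx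
          · exact h
        obtain ⟨h3, hsupp⟩ := cycle_tri_aux ha q hq hvx hx hxy''
        exact ⟨h3, fun z hz => by rcases hsupp z hz with h | h | h <;> tauto⟩
      · exact absurd hy (fun h => key x y hxy hx h)

lemma mem_support_rotate_iff [DecidableEq V] {v u z : V} (c : G.Walk v v)
    (h : u ∈ c.support) : z ∈ (c.rotate u h).support ↔ z ∈ c.support := by
  rw [Walk.rotate, Walk.mem_support_append_iff, or_comm, ← Walk.mem_support_append_iff,
    Walk.take_spec]

end Aux

/-- for an optimal solution `𝒞 ∈ 𝒮`, a cycle `C ∈ 𝒞` that is not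
a triangle inside a special clique, a vertex `v` of `C` and its two neighbors
`x, y` on `C`, no special clique contains all of `v, x, y`. -/
theorem stmt_16 {V : Type*} [Fintype V] (B : SimpleGraph V) (W U : Set V)
    (hbip : IsBipartition B W U) (k : ℕ) (hk : 0 < k)
    (w : Fin k → V) (c : ∀ i, (halfSquare B W).Walk (w i) (w i))
    (hS : InOptS B W U k w c)
    (i : Fin k) (hi : ¬ IsSpecialTriangle B U (c i))
    (v x y : V) (hv : v ∈ (c i).support) (hxy : x ≠ y)
    (hx : s(v, x) ∈ (c i).edges) (hy : s(v, y) ∈ (c i).edges) :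
    ¬ ∃ s₀ ∈ U, v ∈ B.neighborSet s₀ ∧ x ∈ B.neighborSet s₀ ∧ y ∈ B.neighborSet s₀ := by
  classical
  rintro ⟨s₀, hs₀U, hvN, hxN, hyN⟩
  obtain ⟨⟨hcyc, -⟩, hind, -⟩ := hS
  have hxs : B.Adj s₀ x := hxN
  have hys : B.Adj s₀ y := hyN
  have hxW : x ∈ W := by
    rcases hbip.2.2 hxs.symm with ⟨h1, -⟩ | ⟨-, h2⟩
    · exact h1
    · exact absurd ⟨h2, hs₀U⟩ (hbip.2.1 s₀)
  have hyW : y ∈ W := by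
    rcases hbip.2.2 hys.symm with ⟨h1, -⟩ | ⟨-, h2⟩
    · exact h1
    · exact absurd ⟨h2, hs₀U⟩ (hbip.2.1 s₀)
  have hadj : (halfSquare B W).Adj x y := ⟨hxy, hxW, hyW, s₀, hxs.symm, hys.symm⟩
  have hxsupp : x ∈ (c i).support := (c i).snd_mem_support_of_mem_edges hx
  have hysupp : y ∈ (c i).support := (c i).snd_mem_support_of_mem_edges hy
  have hxyE : s(x, y) ∈ (c i).edges := hind i x hxsupp y hysupp hadj
  set d := (c i).rotate v hv with hd
  have hdc : d.IsCycle := (hcyc i).rotate hv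
  have erot : d.edges ~r (c i).edges := (c i).rotate_edges v hv
  obtain ⟨hlen, hsupp3⟩ := cycle_triangle d hdc hxy (erot.mem_iff.mpr hx)
    (erot.mem_iff.mpr hy) (erot.mem_iff.mpr hxyE)
  apply hi
  refine ⟨?_, s₀, hs₀U, ?_⟩
  · calc (c i).length = (c i).edges.length := ((c i).length_edges).symm
      _ = d.edges.length := erot.perm.length_eq.symm
      _ = d.length := d.length_edges
      _ = 3 := hlen
  · intro z hz
    have hz' : z ∈ d.support := (mem_support_rotate_iff (c i) hv).mpr hz
    rcases hsupp3 z hz' with rfl | rfl | rfl <;> assumption
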